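/- Let N be a non-abelian minimal normal subgroup of a finite group G. Then N is contained in the kernel of every irreducible complex character of G of degree at most 2. -/

import Mathlib

open CategoryTheory Module

/-- The set of irreducible complex characters of `G`: characters of simple
finite-dimensional complex representations of `G`. -/
noncomputable def IrrChar (G : Type) [Group G] : Set (G → ℂ) :=
  {χ | ∃ V : FDRep ℂ G, Simple V ∧ χ = fun g => V.character g}

/-- The degree of a character, read off from its value at `1`. -/
noncomputable def charDeg {G : Type} [Group G] (χ : G → ℂ) : ℕ :=
  ⌊(χ 1).re⌋₊

/-- The average degree of the irreducible characters of `G` satisfying a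
predicate `p` (with the convention that the average of the empty set is `0`). -/
noncomputable def acdRel (G : Type) [Group G] (p : (G → ℂ) → Prop) : ℝ :=
  (∑ᶠ χ ∈ {χ ∈ IrrChar G | p χ}, (charDeg χ : ℝ)) /
    ({χ ∈ IrrChar G | p χ} : Set (G → ℂ)).ncard

/-- The average character degree of `G`. -/
noncomputable def acd (G : Type) [Group G] : ℝ := acdRel G fun _ => True
open CategoryTheory Module in
section
section MatrixAux
variable (A B : Matrix (Fin 2) (Fin 2) ℂ)

lemma matCH : A * A = A.trace • A - A.det • 1 := by
  ext i j
  fin_cases i <;> fin_cases j <;>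
    simp [Matrix.mul_apply, Fin.sum_univ_two, Matrix.trace_fin_two, Matrix.det_fin_two,
      Matrix.one_apply] <;> ring

lemma matT2 : A.trace * A.trace = (A * A).trace + 2 * A.det := by
  simp [Matrix.mul_apply, Fin.sum_univ_two, Matrix.trace_fin_two, Matrix.det_fin_two]
  ring

lemma matInvTrace (hAB : A * B = 1) (hd : A.det = 1) : B.trace = A.trace := by
  have hB : B = A⁻¹ := (Matrix.inv_eq_right_inv hAB).symm
  rw [hB, Matrix.inv_def, hd, Matrix.adjugate_fin_two]
  simp [Matrix.trace_fin_two, Ring.inverse_one]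
  ring

lemma matScalar (h2 : A * A = 1) (hd : A.det = 1) : ∃ c : ℂ, A = c • 1 := by
  have h := matCH A
  rw [h2, hd, one_smul] at h
  have h' : A.trace • A = (2 : ℂ) • (1 : Matrix (Fin 2) (Fin 2) ℂ) := by
    have := congrArg (· + (1 : Matrix (Fin 2) (Fin 2) ℂ)) h
    simp at this
    rw [← this]; module
  by_cases ht : A.trace = 0
  · exfalso
    rw [ht, zero_smul] at h'
    have := congrFun (congrFun h' 0) 0
    simp [Matrix.one_apply] at this
  · have := congrArg (fun M => (A.trace)⁻¹ • M) h'
    simp only [smul_smul] at this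
    rw [inv_mul_cancel₀ ht, one_smul] at this
    exact ⟨A.trace⁻¹ * 2, this⟩
end MatrixAux

section LinAux
variable {V : Type} [AddCommGroup V] [Module ℂ V] [FiniteDimensional ℂ V]

noncomputable def myb (h2 : finrank ℂ V = 2) : Basis (Fin 2) ℂ V :=
  (Module.finBasis ℂ V).reindex (finCongr h2)

lemma linInvTrace (h2 : finrank ℂ V = 2) (f g : V →ₗ[ℂ] V) (hfg : f * g = 1) (hd : LinearMap.det f = 1) :
    LinearMap.trace ℂ V g = LinearMap.trace ℂ V f := by
  let b := myb h2
  rw [LinearMap.trace_eq_matrix_trace ℂ b, LinearMap.trace_eq_matrix_trace ℂ b]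
  apply matInvTrace
  · rw [← LinearMap.toMatrix_mul, hfg, LinearMap.toMatrix_one]
  · rw [LinearMap.det_toMatrix, hd]

lemma linT2 (h2 : finrank ℂ V = 2) (f : V →ₗ[ℂ] V) :
    LinearMap.trace ℂ V f * LinearMap.trace ℂ V f
      = LinearMap.trace ℂ V (f * f) + 2 * LinearMap.det f := by
  let b := myb h2
  rw [LinearMap.trace_eq_matrix_trace ℂ b, LinearMap.trace_eq_matrix_trace ℂ b,
    ← LinearMap.det_toMatrix b, LinearMap.toMatrix_mul]
  exact matT2 _

lemma linScalar (h2 : finrank ℂ V = 2) (f : V →ₗ[ℂ] V) (hff : f * f = 1) (hd : LinearMap.det f = 1) :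
    ∃ c : ℂ, f = c • (1 : V →ₗ[ℂ] V) := by
  let b := myb h2
  have hA : LinearMap.toMatrix b b f * LinearMap.toMatrix b b f = 1 := by
    rw [← LinearMap.toMatrix_mul, hff, LinearMap.toMatrix_one]
  have hDet : (LinearMap.toMatrix b b f).det = 1 := by
    rw [LinearMap.det_toMatrix, hd]
  obtain ⟨c, hc⟩ := matScalar (LinearMap.toMatrix b b f) hA hDet
  refine ⟨c, ?_⟩
  apply (LinearMap.toMatrix b b).injective
  rw [hc, LinearEquiv.map_smul, LinearMap.toMatrix_one]

lemma linUnip (f : V →ₗ[ℂ] V) (m : ℕ) (hm : 0 < m) (hfm : f ^ m = 1)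
    (hsq : (f - 1) * (f - 1) = 0) : f = 1 := by
  set η := f - 1 with hη
  have hf : f = 1 + η := by rw [hη]; abel
  have key : ∀ k : ℕ, f ^ k = 1 + (k : ℂ) • η := by
    intro k
    induction k with
    | zero => simp
    | succ k ih =>
      rw [pow_succ, ih, hf]
      push_cast
      have : ((1 : V →ₗ[ℂ] V) + (k : ℂ) • η) * (1 + η)
          = 1 + ((k : ℂ) + 1) • η + (k : ℂ) • (η * η) := by
        simp only [mul_add, add_mul, one_mul, mul_one, smul_mul_assoc]
        module
      rw [this, hsq, smul_zero, add_zero]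
  have h1 : (1 : V →ₗ[ℂ] V) + (m : ℂ) • η = 1 := by rw [← key, hfm]
  have h2 : (m : ℂ) • η = 0 := by
    have := congrArg (fun x => x - (1 : V →ₗ[ℂ] V)) h1
    simpa using this
  have hm0 : (m : ℂ) ≠ 0 := Nat.cast_ne_zero.mpr hm.ne'
  have : η = 0 := by
    have := congrArg (fun x => ((m : ℂ)⁻¹) • x) h2
    simpa [smul_smul, inv_mul_cancel₀ hm0] using this
  rw [hf, this, add_zero]

lemma linScalar1 {M : Type} [AddCommGroup M] [Module ℂ M] (h : finrank ℂ M = 1)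
    (f : M →ₗ[ℂ] M) : ∃ c : ℂ, ∀ v, f v = c • v := by
  obtain ⟨v, hv, hall⟩ := finrank_eq_one_iff'.mp h
  obtain ⟨a, ha⟩ := hall (f v)
  refine ⟨a, fun w => ?_⟩
  obtain ⟨c, hc⟩ := hall w
  rw [← hc, f.map_smul, ← ha]; exact smul_comm c a v
end LinAux

noncomputable def resRep {H M : Type} [Group H] [AddCommGroup M] [Module ℂ M]
    (ρ : Representation ℂ H M) (U : Submodule ℂ M)
    (hU : ∀ g, ∀ v ∈ U, ρ g v ∈ U) : Representation ℂ H U where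
  toFun g := (ρ g).restrict (fun v hv => hU g v hv)
  map_one' := by ext v; simp
  map_mul' g h := by ext v; simp [LinearMap.restrict_apply]

lemma aux_simple {H : Type} [Group H] (W : FDRep ℂ H) (h0 : 0 < finrank ℂ W)
    (hirr : ∀ U : Submodule ℂ W, (∀ g : H, ∀ v ∈ U, W.ρ g v ∈ U) → U = ⊥ ∨ U = ⊤) :
    Simple W := by
  have hnt : Nontrivial W := finrank_pos_iff.mp h0
  constructor
  intro Y f hm
  constructor
  · intro hiso h0f
    subst h0f
    have hid : 𝟙 W = (0 : W ⟶ W) := by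
      calc 𝟙 W = inv (0 : Y ⟶ W) ≫ 0 := (IsIso.inv_hom_id _).symm
      _ = 0 := Limits.comp_zero
    obtain ⟨w, hw⟩ := exists_ne (0 : W)
    have := congrArg (fun φ : W ⟶ W => φ.hom.hom.hom) hid
    have h2 : w = 0 := congrFun (congrArg (fun (l : W →ₗ[ℂ] W) => ⇑l) this) w
    exact hw h2
  · intro h0f
    have hfhom : (f.hom.hom.hom : Y →ₗ[ℂ] W) ≠ 0 := by
      intro h; apply h0f; apply Action.hom_ext; apply InducedCategory.hom_ext; apply ModuleCat.hom_ext; exact h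
    have hcomm : ∀ (g : H) (y : Y), W.ρ g (f.hom y) = f.hom (Y.ρ g y) := by
      intro g y
      have := f.comm g
      have := congrFun (congrArg (fun (l : Y →ₗ[ℂ] W) => ⇑l) (congrArg (fun φ : Y.V ⟶ W.V => φ.hom.hom) this)) y
      exact this.symm
    -- surjectivity
    have hsurj : Function.Surjective (f.hom.hom.hom : Y →ₗ[ℂ] W) := by
      have hinv : ∀ g : H, ∀ v ∈ LinearMap.range (f.hom.hom.hom : Y →ₗ[ℂ] W),
          W.ρ g v ∈ LinearMap.range (f.hom.hom.hom : Y →ₗ[ℂ] W) := by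
        rintro g v ⟨y, rfl⟩
        exact ⟨Y.ρ g y, (hcomm g y).symm⟩
      rcases hirr _ hinv with h | h
      · exact absurd (LinearMap.range_eq_bot.mp h) hfhom
      · exact LinearMap.range_eq_top.mp h
    -- injectivity
    have hK : ∀ g : H, ∀ v ∈ LinearMap.ker (f.hom.hom.hom : Y →ₗ[ℂ] W),
        Y.ρ g v ∈ LinearMap.ker (f.hom.hom.hom : Y →ₗ[ℂ] W) := by
      intro g v hv
      rw [LinearMap.mem_ker] at hv ⊢
      refine Eq.trans (hcomm g v).symm ?_
      rw [show f.hom v = 0 from hv, map_zero]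
    let Z : FDRep ℂ H := FDRep.of (resRep Y.ρ _ hK)
    let ι : Z ⟶ Y := ⟨InducedCategory.homMk (ModuleCat.ofHom (LinearMap.ker (f.hom.hom.hom : Y →ₗ[ℂ] W)).subtype), by
      intro g; ext v; rfl⟩
    have hιf : ι ≫ f = 0 ≫ f := by
      apply Action.hom_ext
      simp only [Action.comp_hom, Action.zero_hom, Limits.zero_comp]
      ext v
      exact v.2
    have hι : ι = 0 := (cancel_mono f).mp hιf
    have hinj : Function.Injective (f.hom.hom.hom : Y →ₗ[ℂ] W) := by
      rw [← LinearMap.ker_eq_bot, Submodule.eq_bot_iff]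
      intro x hx
      have h2 := congrArg (fun φ : Z ⟶ Y => φ.hom.hom.hom) hι
      exact congrFun (congrArg (fun (l : _ →ₗ[ℂ] Y) => ⇑l) h2) ⟨x, hx⟩
    let e := LinearEquiv.ofBijective (f.hom.hom.hom : Y →ₗ[ℂ] W) ⟨hinj, hsurj⟩
    have : IsIso f.hom := by
      refine ⟨InducedCategory.homMk (ModuleCat.ofHom e.symm.toLinearMap), ?_, ?_⟩
      · ext y; exact e.symm_apply_apply y
      · ext w; exact e.apply_symm_apply w
    exact Action.isIso_of_hom_isIso f
end

open scoped commutatorElement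
/-- A non-abelian minimal normal subgroup of a finite group `G` is contained in
the kernel of every irreducible character of `G` of degree at most `2`. -/
theorem minimal_normal_le_ker_of_degree_le_two (G : Type) [Group G] [Finite G]
    (N : Subgroup G) [N.Normal] (hnt : N ≠ ⊥)
    (hmin : ∀ K : Subgroup G, K.Normal → K ≤ N → K = ⊥ ∨ K = N)
    (hna : ∃ x y : N, x * y ≠ y * x) :
    ∀ χ ∈ IrrChar G, charDeg χ ≤ 2 → ∀ n ∈ N, χ n = χ 1 := by
  classical
  rintro χ ⟨V, hsV, rfl⟩ hdeg n hn
  show V.character n = V.character 1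
  -- the degree
  have hchar1 : V.character 1 = (finrank ℂ V : ℂ) := FDRep.char_one V
  have hdle : finrank ℂ V ≤ 2 := by
    have hcd : charDeg (fun g => V.character g) = finrank ℂ V := by
      simp [charDeg, hchar1]
    rwa [hcd] at hdeg
  have hdpos : 0 < finrank ℂ V := by
    by_contra h
    have h0 : finrank ℂ V = 0 := by omega
    have hss : Subsingleton V := Module.finrank_zero_iff.mp h0
    exact CategoryTheory.id_nonzero V
      (Action.hom_ext _ _ (InducedCategory.hom_ext (ModuleCat.hom_ext (LinearMap.ext fun v => @Subsingleton.elim _ hss _ _))))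
  -- the kernel of the representation
  let Kr : Subgroup G :=
    { carrier := {g | V.ρ g = 1}
      one_mem' := map_one V.ρ
      mul_mem' := by
        intro a b ha hb
        show V.ρ (a * b) = 1
        rw [_root_.map_mul, ha, hb, one_mul]
      inv_mem' := by
        intro a ha
        show V.ρ a⁻¹ = 1
        calc V.ρ a⁻¹ = V.ρ a⁻¹ * V.ρ a := by rw [ha, mul_one]
        _ = 1 := by rw [← _root_.map_mul, inv_mul_cancel, _root_.map_one] }
  have hKrmem : ∀ g, g ∈ Kr ↔ V.ρ g = 1 := fun g => Iff.rfl
  have hKrn : (N ⊓ Kr).Normal := by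
    constructor
    intro x hx g
    rw [Subgroup.mem_inf] at hx ⊢
    constructor
    · exact ‹N.Normal›.conj_mem x hx.1 g
    · show V.ρ (g * x * g⁻¹) = 1
      rw [_root_.map_mul, _root_.map_mul, hx.2, mul_one, ← _root_.map_mul, mul_inv_cancel, _root_.map_one]
  rcases hmin (N ⊓ Kr) hKrn inf_le_left with hK | hK
  swap
  · -- N is in the kernel
    have hnk : n ∈ Kr := by
      have : n ∈ N ⊓ Kr := by rw [hK]; exact hn
      exact this.2
    show LinearMap.trace ℂ V (V.ρ n) = V.character 1
    rw [hKrmem n |>.mp hnk, hchar1, LinearMap.trace_one]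
  -- main case : the representation is faithful on N; derive a contradiction
  exfalso
  have hinj : ∀ m ∈ N, V.ρ m = 1 → m = 1 := by
    intro m hm h1
    have : m ∈ N ⊓ Kr := Subgroup.mem_inf.mpr ⟨hm, h1⟩
    rw [hK] at this
    exact Subgroup.mem_bot.mp this
  have hcomm_of : ∀ a ∈ N, ∀ b ∈ N, V.ρ a * V.ρ b = V.ρ b * V.ρ a → a * b = b * a := by
    intro a ha b hb hab
    have h1 : V.ρ (a * b * (b * a)⁻¹) = 1 := by
      rw [_root_.map_mul, _root_.map_mul, hab, ← _root_.map_mul, ← _root_.map_mul, mul_inv_cancel, _root_.map_one]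
    have hmem : a * b * (b * a)⁻¹ ∈ N := by
      exact N.mul_mem (N.mul_mem ha hb) (N.inv_mem (N.mul_mem hb ha))
    have := hinj _ hmem h1
    rw [mul_inv_eq_one] at this
    exact this
  have hNna : ¬ ∀ a ∈ N, ∀ b ∈ N, a * b = b * a := by
    intro h
    obtain ⟨x, y, hxy⟩ := hna
    exact hxy (Subtype.ext (h x x.2 y y.2))
  -- perfectness of N
  have hperf : ⁅N, N⁆ = N := by
    rcases hmin ⁅N, N⁆ inferInstance (Subgroup.commutator_le_left N N) with h | h
    · exfalso
      apply hNna
      intro a ha b hb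
      have : ⁅a, b⁆ ∈ ⁅N, N⁆ := Subgroup.commutator_mem_commutator ha hb
      rw [h, Subgroup.mem_bot] at this
      exact commutatorElement_eq_one_iff_mul_comm.mp this
    · exact h
  -- determinant is 1 on N
  have hdet : ∀ m ∈ N, LinearMap.det (V.ρ m) = 1 := by
    have hsub : N ≤
        { carrier := {g | LinearMap.det (V.ρ g) = 1}
          one_mem' := by show LinearMap.det (V.ρ 1) = 1; rw [_root_.map_one, _root_.map_one LinearMap.det]
          mul_mem' := by
            intro a b ha hb
            show LinearMap.det (V.ρ (a * b)) = 1
            rw [_root_.map_mul, _root_.map_mul LinearMap.det, ha, hb, one_mul]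
          inv_mem' := by
            intro a ha
            show LinearMap.det (V.ρ a⁻¹) = 1
            have : LinearMap.det (V.ρ a⁻¹) * LinearMap.det (V.ρ a) = 1 := by
              rw [← _root_.map_mul LinearMap.det, ← _root_.map_mul, inv_mul_cancel, _root_.map_one, _root_.map_one LinearMap.det]
            rwa [ha, mul_one] at this } := by
      rw [← hperf]
      rw [Subgroup.commutator_le]
      intro a _ b _
      show LinearMap.det (V.ρ ⁅a, b⁆) = 1
      have hainv : LinearMap.det (V.ρ a⁻¹) * LinearMap.det (V.ρ a) = 1 := by
        rw [← _root_.map_mul LinearMap.det, ← _root_.map_mul, inv_mul_cancel, _root_.map_one, _root_.map_one LinearMap.det]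
      have hbinv : LinearMap.det (V.ρ b⁻¹) * LinearMap.det (V.ρ b) = 1 := by
        rw [← _root_.map_mul LinearMap.det, ← _root_.map_mul, inv_mul_cancel, _root_.map_one, _root_.map_one LinearMap.det]
      show LinearMap.det (V.ρ (a * b * a⁻¹ * b⁻¹)) = 1
      simp only [_root_.map_mul]
      calc LinearMap.det (V.ρ a) * LinearMap.det (V.ρ b) * LinearMap.det (V.ρ a⁻¹) *
            LinearMap.det (V.ρ b⁻¹)
          = (LinearMap.det (V.ρ a⁻¹) * LinearMap.det (V.ρ a)) *
            (LinearMap.det (V.ρ b⁻¹) * LinearMap.det (V.ρ b)) := by ring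
        _ = 1 := by rw [hainv, hbinv, one_mul]
    exact fun m hm => hsub hm
  -- triviality test via the centralizer
  have hZc : ∀ z ∈ N, (∀ m ∈ N, m * z = z * m) → z = 1 := by
    intro z hz hcent
    let Zc : Subgroup G := N ⊓ Subgroup.centralizer ↑N
    have hZcn : Zc.Normal := by
      constructor
      intro x hx g
      rw [Subgroup.mem_inf] at hx ⊢
      obtain ⟨hxN, hxC⟩ := hx
      constructor
      · exact ‹N.Normal›.conj_mem x hxN g
      · rw [Subgroup.mem_centralizer_iff]
        intro h hh
        have hmem : g⁻¹ * h * g ∈ (↑N : Set G) := by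
          have := ‹N.Normal›.conj_mem h hh g⁻¹
          simpa using this
        have key : (g⁻¹ * h * g) * x = x * (g⁻¹ * h * g) :=
          (Subgroup.mem_centralizer_iff.mp hxC) _ hmem
        calc h * (g * x * g⁻¹) = g * ((g⁻¹ * h * g) * x) * g⁻¹ := by group
          _ = g * (x * (g⁻¹ * h * g)) * g⁻¹ := by rw [key]
          _ = g * x * g⁻¹ * h := by group
    rcases hmin Zc hZcn inf_le_left with h | h
    · have : z ∈ Zc := ⟨hz, Subgroup.mem_centralizer_iff.mpr (fun m hm => hcent m hm)⟩
      rw [h] at this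
      exact Subgroup.mem_bot.mp this
    · exfalso
      apply hNna
      intro a ha b hb
      have : b ∈ Zc := by rw [h]; exact hb
      exact (Subgroup.mem_centralizer_iff.mp this.2 a ha).symm ▸
        (Subgroup.mem_centralizer_iff.mp this.2 a ha)
  have hd12 : finrank ℂ V = 1 ∨ finrank ℂ V = 2 := by omega
  rcases hd12 with hd1 | hd2
  · -- dimension 1 : the image is abelian, contradiction
    apply hNna
    intro a ha b hb
    apply hcomm_of a ha b hb
    obtain ⟨ca, hca⟩ := linScalar1 hd1 (V.ρ a)
    obtain ⟨cb, hcb⟩ := linScalar1 hd1 (V.ρ b)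
    ext v
    simp only [Module.End.mul_apply]
    rw [hcb, hca, hca, hcb, smul_comm]
  -- dimension 2
  by_cases hexU : ∃ U : Submodule ℂ V, (∀ m ∈ N, ∀ v ∈ U, V.ρ m v ∈ U) ∧ U ≠ ⊥ ∧ U ≠ ⊤
  · -- reducible case : N acts by a unipotent action, so trivially
    obtain ⟨U, hUinv, hUbot, hUtop⟩ := hexU
    have hU1 : finrank ℂ U = 1 := by
      have hlt : finrank ℂ U < 2 := by
        rw [← hd2]
        exact Submodule.finrank_lt hUtop
      have hpos : finrank ℂ U ≠ 0 := fun h => hUbot (Submodule.finrank_eq_zero.mp h)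
      omega
    have hQ1 : finrank ℂ (V ⧸ U) = 1 := by
      have := Submodule.finrank_quotient_add_finrank U
      omega
    obtain ⟨u0, hu0U, hu0⟩ := Submodule.ne_bot_iff U |>.mp hUbot
    obtain ⟨v1, -, hv1⟩ := SetLike.exists_of_lt (lt_top_iff_ne_top.mpr hUtop : U < ⊤)
    have hscal : ∀ m ∈ N, ∃ c : ℂ, ∀ v ∈ U, V.ρ m v = c • v := by
      intro m hm
      obtain ⟨c, hc⟩ := linScalar1 hU1 ((V.ρ m).restrict (fun v hv => hUinv m hm v hv))
      refine ⟨c, fun v hv => ?_⟩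
      have h2 := congrArg Subtype.val (hc ⟨v, hv⟩)
      simpa [LinearMap.restrict_apply] using h2
    have hscalQ : ∀ m ∈ N, ∃ c : ℂ, ∀ v : V, V.ρ m v - c • v ∈ U := by
      intro m hm
      have hle : U ≤ Submodule.comap (V.ρ m) U := fun v hv => hUinv m hm v hv
      obtain ⟨c, hc⟩ := linScalar1 hQ1 (Submodule.mapQ U U (V.ρ m) hle)
      refine ⟨c, fun v => ?_⟩
      have := hc (Submodule.Quotient.mk v)
      rw [Submodule.mapQ_apply, ← Submodule.Quotient.mk_smul] at this
      exact (Submodule.Quotient.eq U).mp this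
    have hcompinv : ∀ (a : G) (v : V), V.ρ a (V.ρ a⁻¹ v) = v := by
      intro a v
      have : V.ρ a * V.ρ a⁻¹ = 1 := by
        rw [← _root_.map_mul, mul_inv_cancel, _root_.map_one]
      exact congrFun (congrArg (fun (l : V →ₗ[ℂ] V) => ⇑l) this) v
    -- the subgroup acting trivially on U and on V/U
    let P : Subgroup G :=
      { carrier := {g | (∀ v ∈ U, V.ρ g v = v) ∧ ∀ v : V, V.ρ g v - v ∈ U}
        one_mem' := by
          constructor
          · intro v _; rw [_root_.map_one]; rfl
          · intro v; rw [_root_.map_one]; show v - v ∈ U; rw [sub_self]; exact U.zero_mem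
        mul_mem' := by
          rintro a b ⟨ha1, ha2⟩ ⟨hb1, hb2⟩
          have hab : ∀ v : V, V.ρ (a * b) v = V.ρ a (V.ρ b v) := by
            intro v; rw [_root_.map_mul]; rfl
          constructor
          · intro v hv
            rw [hab, hb1 v hv, ha1 v hv]
          · intro v
            rw [hab]
            have h1 : V.ρ a (V.ρ b v) - V.ρ b v ∈ U := ha2 (V.ρ b v)
            have h2 : V.ρ b v - v ∈ U := hb2 v
            have : V.ρ a (V.ρ b v) - v
                = (V.ρ a (V.ρ b v) - V.ρ b v) + (V.ρ b v - v) := by abel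
            rw [this]
            exact U.add_mem h1 h2
        inv_mem' := by
          rintro a ⟨ha1, ha2⟩
          have hkey : ∀ v : V, v - V.ρ a⁻¹ v ∈ U := by
            intro v
            have := ha2 (V.ρ a⁻¹ v)
            rwa [hcompinv a v] at this
          constructor
          · intro v hv
            have hmem : V.ρ a⁻¹ v ∈ U := by
              have : V.ρ a⁻¹ v = v - (v - V.ρ a⁻¹ v) := by abel
              rw [this]
              exact U.sub_mem hv (hkey v)
            have := ha1 _ hmem
            rw [hcompinv a v] at this
            exact this.symm
          · intro v
            have := U.neg_mem (hkey v)
            rwa [neg_sub] at this }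
    have hNP : N ≤ P := by
      rw [← hperf, Subgroup.commutator_le]
      intro a ha b hb
      obtain ⟨ca, hca⟩ := hscal a ha
      obtain ⟨ca', hca'⟩ := hscal a⁻¹ (N.inv_mem ha)
      obtain ⟨cb, hcb⟩ := hscal b hb
      obtain ⟨cb', hcb'⟩ := hscal b⁻¹ (N.inv_mem hb)
      obtain ⟨da, hda⟩ := hscalQ a ha
      obtain ⟨da', hda'⟩ := hscalQ a⁻¹ (N.inv_mem ha)
      obtain ⟨db, hdb⟩ := hscalQ b hb
      obtain ⟨db', hdb'⟩ := hscalQ b⁻¹ (N.inv_mem hb)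
      -- scalar relations
      have hrel : ∀ (x : G), x ∈ N → ∀ cx cx' : ℂ, (∀ v ∈ U, V.ρ x v = cx • v) →
          (∀ v ∈ U, V.ρ x⁻¹ v = cx' • v) → cx * cx' = 1 := by
        intro x _ cx cx' h1 h2
        have hm : V.ρ x⁻¹ u0 ∈ U := hUinv x⁻¹ (N.inv_mem ‹x ∈ N›) u0 hu0U
        have e1 : V.ρ x (V.ρ x⁻¹ u0) = u0 := hcompinv x u0
        rw [h2 u0 hu0U] at e1
        rw [map_smul, h1 u0 hu0U, smul_smul] at e1
        have : (cx' * cx - 1) • u0 = 0 := by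
          rw [sub_smul, one_smul, e1, sub_self]
        rcases smul_eq_zero.mp this with h | h
        · rw [sub_eq_zero] at h
          rw [mul_comm] at h
          exact h
        · exact absurd h hu0
      have hrelQ : ∀ (x : G), x ∈ N → ∀ dx dx' : ℂ, (∀ v : V, V.ρ x v - dx • v ∈ U) →
          (∀ v : V, V.ρ x⁻¹ v - dx' • v ∈ U) → dx * dx' = 1 := by
        intro x _ dx dx' h1 h2
        have e1 : v1 - (dx * dx') • v1 ∈ U := by
          have k1 : V.ρ x (V.ρ x⁻¹ v1) - dx • (V.ρ x⁻¹ v1) ∈ U := h1 _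
          have k2 : dx • (V.ρ x⁻¹ v1 - dx' • v1) ∈ U := U.smul_mem _ (h2 v1)
          have : v1 - (dx * dx') • v1
              = (V.ρ x (V.ρ x⁻¹ v1) - dx • (V.ρ x⁻¹ v1))
                + dx • (V.ρ x⁻¹ v1 - dx' • v1) := by
            rw [hcompinv x v1, smul_sub, smul_smul]
            abel
          rw [this]
          exact U.add_mem k1 k2
        by_contra hne
        apply hv1
        have hnz : (1 : ℂ) - dx * dx' ≠ 0 := fun h => hne (by linear_combination -h)
        have hv1eq : v1 - (dx * dx') • v1 = (1 - dx * dx') • v1 := by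
          rw [sub_smul, one_smul]
        have : v1 = ((1 - dx * dx')⁻¹) • (v1 - (dx * dx') • v1) := by
          rw [hv1eq, smul_smul, inv_mul_cancel₀ hnz, one_smul]
        rw [this]
        exact U.smul_mem _ e1
      have rA : ca * ca' = 1 := hrel a ha ca ca' hca hca'
      have rB : cb * cb' = 1 := hrel b hb cb cb' hcb hcb'
      have rQA : da * da' = 1 := hrelQ a ha da da' hda hda'
      have rQB : db * db' = 1 := hrelQ b hb db db' hdb hdb'
      have hexp : ∀ v : V, V.ρ ⁅a, b⁆ v = V.ρ a (V.ρ b (V.ρ a⁻¹ (V.ρ b⁻¹ v))) := by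
        intro v
        rw [commutatorElement_def, _root_.map_mul, _root_.map_mul, _root_.map_mul]
        rfl
      refine ⟨?_, ?_⟩
      · intro v hv
        have s1 : V.ρ b⁻¹ v = cb' • v := hcb' v hv
        have s2 : V.ρ a⁻¹ (cb' • v) = (cb' * ca') • v := by
          rw [map_smul, hca' v hv, smul_smul]
        have s3 : V.ρ b ((cb' * ca') • v) = ((cb' * ca') * cb) • v := by
          rw [map_smul, hcb v hv, smul_smul]
        have s4 : V.ρ a (((cb' * ca') * cb) • v) = ((((cb' * ca') * cb)) * ca) • v := by
          rw [map_smul, hca v hv, smul_smul]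
        rw [hexp v, s1, s2, s3, s4]
        have hsc : (((cb' * ca') * cb)) * ca = 1 := by
          calc (((cb' * ca') * cb)) * ca = (ca * ca') * (cb * cb') := by ring
          _ = 1 := by rw [rA, rB, one_mul]
        rw [hsc, one_smul]
      · intro v
        have step : ∀ (x : G) (dx : ℂ), (∀ u : V, V.ρ x u - dx • u ∈ U) → ∀ (w : V) (c : ℂ),
            (w - c • v ∈ U) → V.ρ x w - (dx * c) • v ∈ U := by
          intro x dx hx w c hw
          have : V.ρ x w - (dx * c) • v = (V.ρ x w - dx • w) + dx • (w - c • v) := by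
            rw [smul_sub, smul_smul]
            abel
          rw [this]
          exact U.add_mem (hx w) (U.smul_mem _ hw)
        have q0 : v - (1 : ℂ) • v ∈ U := by rw [one_smul, sub_self]; exact U.zero_mem
        have q1 := step b⁻¹ db' hdb' v 1 q0
        have q2 := step a⁻¹ da' hda' _ _ q1
        have q3 := step b db hdb _ _ q2
        have q4 := step a da hda _ _ q3
        have hsc : da * (db * (da' * (db' * 1))) = 1 := by
          calc da * (db * (da' * (db' * 1))) = (da * da') * (db * db') := by ring
          _ = 1 := by rw [rQA, rQB, one_mul]
        rw [hsc, one_smul] at q4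
        show V.ρ ⁅a, b⁆ v - v ∈ U
        rw [hexp v]
        exact q4
    -- now every element of N acts unipotently, hence trivially
    apply hnt
    rw [Subgroup.eq_bot_iff_forall]
    intro m hm
    have hmP := hNP hm
    obtain ⟨hP1, hP2⟩ := hmP
    have hsq : (V.ρ m - 1) * (V.ρ m - 1) = 0 := by
      ext v
      simp only [Module.End.mul_apply, LinearMap.sub_apply, Module.End.one_apply,
        LinearMap.zero_apply]
      have h1 : V.ρ m v - v ∈ U := hP2 v
      have h2 := hP1 _ h1
      rw [h2, sub_self]
    have hpow : (V.ρ m) ^ (orderOf m) = 1 := by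
      rw [← map_pow, pow_orderOf_eq_one, _root_.map_one]
    have hu := linUnip (V.ρ m) (orderOf m) (orderOf_pos m) hpow hsq
    exact hinj m hm hu
  · -- irreducible case : counting argument
    push_neg at hexU
    letI : Fintype ↥N := Fintype.ofFinite _
    let W : FDRep ℂ ↥N := FDRep.of (V.ρ.comp N.subtype)
    have hWρ : ∀ x : ↥N, W.ρ x = V.ρ ↑x := fun x => rfl
    have hWfin : finrank ℂ W = 2 := hd2
    have hsW : Simple W := by
      apply aux_simple W (by rw [hWfin]; norm_num)
      intro U hUinv
      by_cases hUb : U = ⊥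
      · exact Or.inl hUb
      · exact Or.inr (hexU U (fun m hm v hv => hUinv ⟨m, hm⟩ v hv) hUb)
    let T : FDRep ℂ ↥N := FDRep.of (Representation.trivial ℂ (G := ↥N) (V := ℂ))
    have hTfin : finrank ℂ T = 1 := Module.finrank_self ℂ
    have hsT : Simple T := by
      apply aux_simple T (by rw [hTfin]; norm_num)
      intro U _
      by_cases hUb : U = ⊥
      · exact Or.inl hUb
      · right
        apply Submodule.eq_top_of_finrank_eq
        have hle := Submodule.finrank_le U
        have h0 : finrank ℂ U ≠ 0 := fun h => hUb (Submodule.finrank_eq_zero.mp h)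
        rw [hTfin] at hle ⊢
        omega
    have hTchar : ∀ x : ↥N, T.character x = 1 := by
      intro x
      show LinearMap.trace ℂ ℂ _ = 1
      have : T.ρ x = LinearMap.id := rfl
      rw [this, LinearMap.trace_id, Module.finrank_self, Nat.cast_one]
    have hcardne : (Nat.card ↥N : ℂ) ≠ 0 := by exact_mod_cast Nat.card_pos.ne'
    haveI : Invertible ((Nat.card ↥N : ℂ)) :=
      invertibleOfNonzero hcardne
    have h1 := FDRep.char_orthonormal (k := ℂ) (G := ↥N) W W
    rw [if_pos ⟨Iso.refl W⟩] at h1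
    have h2 := FDRep.char_orthonormal (k := ℂ) (G := ↥N) W T
    rw [if_neg ?niso] at h2
    case niso =>
      rintro ⟨i⟩
      have := (FDRep.isoToLinearEquiv i).finrank_eq
      rw [hWfin, hTfin] at this
      omega
    have hsum1 : ∑ x : ↥N, W.character x * W.character x⁻¹ = (Fintype.card ↥N : ℂ) := by
      have h := (inv_mul_eq_iff_eq_mul₀ hcardne).mp h1
      simp only [Nat.cast_one, mul_one, Nat.card_eq_fintype_card] at h
      exact h
    have hsum2 : ∑ x : ↥N, W.character x * T.character x⁻¹ = 0 := by
      have h := (inv_mul_eq_iff_eq_mul₀ hcardne).mp h2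
      simp only [Nat.cast_zero, mul_zero] at h
      exact h
    have hsum0 : ∑ x : ↥N, W.character x = 0 := by
      rw [← hsum2]
      apply Finset.sum_congr rfl
      intro x _
      rw [hTchar x⁻¹, mul_one]
    -- trace identities
    have hinvchar : ∀ x : ↥N, W.character x⁻¹ = W.character x := by
      intro x
      show LinearMap.trace ℂ V (V.ρ ↑x⁻¹) = LinearMap.trace ℂ V (V.ρ ↑x)
      apply linInvTrace hd2 (V.ρ ↑x) (V.ρ ↑x⁻¹)
      · rw [← _root_.map_mul]
        norm_num
      · exact hdet ↑x x.2
    have hsqchar : ∀ x : ↥N, W.character x * W.character x = W.character (x * x) + 2 := by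
      intro x
      have h := linT2 hd2 (V.ρ ↑x)
      have hxx : V.ρ ↑x * V.ρ ↑x = V.ρ ↑(x * x) := by
        rw [← _root_.map_mul]
        norm_num
      rw [hxx] at h
      rw [hdet ↑x x.2, mul_one] at h
      exact h
    -- N has odd order
    have hodd : ¬ 2 ∣ Fintype.card ↥N := by
      intro h2d
      obtain ⟨x0, hx0⟩ := exists_prime_orderOf_dvd_card 2 h2d
      have hmne : (↑x0 : G) ≠ 1 := by
        intro h
        have : x0 = 1 := Subtype.ext h
        rw [this, orderOf_one] at hx0
        omega
      have hmm : V.ρ ↑x0 * V.ρ ↑x0 = 1 := by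
        have hx2 : x0 * x0 = 1 := by
          have := pow_orderOf_eq_one x0
          rwa [hx0, pow_two] at this
        have : (↑x0 : G) * ↑x0 = 1 := by
          have := congrArg (Subtype.val) hx2
          simpa using this
        rw [← _root_.map_mul, this, _root_.map_one]
      obtain ⟨c, hc⟩ := linScalar hd2 (V.ρ ↑x0) hmm (hdet ↑x0 x0.2)
      apply hmne
      apply hZc ↑x0 x0.2
      intro m hm
      apply hcomm_of m hm ↑x0 x0.2
      rw [hc, mul_smul_comm, smul_mul_assoc, mul_one, one_mul]
    have hcop : (Nat.card ↥N).Coprime 2 := by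
      rw [Nat.card_eq_fintype_card]
      exact ((Nat.prime_two.coprime_iff_not_dvd).mpr hodd).symm
    have hsumsq : ∑ x : ↥N, W.character (x * x) = 0 := by
      calc ∑ x : ↥N, W.character (x * x)
          = ∑ x : ↥N, W.character ((powCoprime hcop) x) := by
            apply Finset.sum_congr rfl
            intro x _
            congr 1
            show x * x = x ^ 2
            rw [pow_two]
        _ = ∑ x : ↥N, W.character x := Equiv.sum_comp _ _
        _ = 0 := hsum0
    have hfinal : (Fintype.card ↥N : ℂ) = 0 + (Fintype.card ↥N : ℂ) * 2 := by
      calc (Fintype.card ↥N : ℂ) = ∑ x : ↥N, W.character x * W.character x⁻¹ := hsum1.symm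
        _ = ∑ x : ↥N, (W.character (x * x) + 2) := by
            apply Finset.sum_congr rfl
            intro x _
            rw [hinvchar x, hsqchar x]
        _ = (∑ x : ↥N, W.character (x * x)) + ∑ _x : ↥N, (2 : ℂ) := Finset.sum_add_distrib
        _ = 0 + (Fintype.card ↥N : ℂ) * 2 := by
            rw [hsumsq, Finset.sum_const, Finset.card_univ, nsmul_eq_mul]
    have hc0 : (Fintype.card ↥N : ℂ) = 0 := by linear_combination -hfinal
    have : Fintype.card ↥N = 0 := by exact_mod_cast hc0
    exact absurd this Fintype.card_ne_zero
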